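/- arXiv:1509.04629 — 3 statements merged into one kernel-verified Lean document; each statement's English description precedes it below -/
import Mathlib

section
/- Let u_1,...,u_r ∈ ℝ^n be orthonormal vectors, L an n×n real matrix, and φ ∈ ℝ^{r×r} a skew-symmetric matrix (φ_{ij} = −φ_{ji}). Consider the constrained minimization of F(v_1,...,v_r) = Σ_{k=1}^r ‖v_k − L u_k‖² over all tuples (v_1,...,v_r) in (ℝ^n)^r satisfying the constraints v_i · u_j = φ_{ij} for all i,j = 1,...,r. Then the tuple defined by v_k* = L u_k − Σ_{j=1}^r ((L u_k · u_j) − φ_{kj}) u_j satisfies the constraints and is the unique minimizer of F over the constraint set. -/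
/-- Theorem 1 of the paper: given orthonormal vectors u₁,...,u_r, a matrix L and a
skew-symmetric φ, the tuple v*ₖ = L uₖ − Σⱼ ((L uₖ · uⱼ) − φₖⱼ) uⱼ satisfies the
constraints vᵢ · uⱼ = φᵢⱼ and is the unique minimizer of
F(v) = Σₖ ‖vₖ − L uₖ‖² over the constraint set. -/
theorem stmt1 {n r : ℕ} (L : Matrix (Fin n) (Fin n) ℝ)
    (u : Fin r → EuclideanSpace ℝ (Fin n)) (hu : Orthonormal ℝ u)
    (φ : Matrix (Fin r) (Fin r) ℝ) (hφ : ∀ i j, φ i j = -φ j i)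
    (F : (Fin r → EuclideanSpace ℝ (Fin n)) → ℝ)
    (hF : F = fun v => ∑ k, ‖v k - Matrix.toEuclideanLin L (u k)‖ ^ 2)
    (vstar : Fin r → EuclideanSpace ℝ (Fin n))
    (hvstar : vstar = fun k => Matrix.toEuclideanLin L (u k) -
      ∑ j, ((inner ℝ (Matrix.toEuclideanLin L (u k)) (u j) : ℝ) - φ k j) • u j) :
    (∀ i j, (inner ℝ (vstar i) (u j) : ℝ) = φ i j) ∧
      ∀ v : Fin r → EuclideanSpace ℝ (Fin n),
        (∀ i j, (inner ℝ (v i) (u j) : ℝ) = φ i j) →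
          F vstar ≤ F v ∧ (F v = F vstar → v = vstar) := by
  have hou : ∀ i j, (inner ℝ (u i) (u j) : ℝ) = if i = j then 1 else 0 :=
    orthonormal_iff_ite.mp hu
  have hcon : ∀ i j, (inner ℝ (vstar i) (u j) : ℝ) = φ i j := by
    intro i j
    rw [hvstar]
    simp only [inner_sub_left, sum_inner, real_inner_smul_left]
    rw [Finset.sum_eq_single j (by intro b _ hb; rw [hou]; simp [hb]) (by simp)]
    rw [hou]; simp
  refine ⟨hcon, fun v hv => ?_⟩
  have key : ∀ k, ‖v k - Matrix.toEuclideanLin L (u k)‖ ^ 2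
      = ‖v k - vstar k‖ ^ 2 + ‖vstar k - Matrix.toEuclideanLin L (u k)‖ ^ 2 := by
    intro k
    have horth : (inner ℝ (v k - vstar k) (vstar k - Matrix.toEuclideanLin L (u k)) : ℝ) = 0 := by
      have hvv : vstar k - Matrix.toEuclideanLin L (u k)
          = -∑ j, ((inner ℝ (Matrix.toEuclideanLin L (u k)) (u j) : ℝ) - φ k j) • u j := by
        rw [hvstar]; exact sub_sub_cancel_left _ _
      rw [hvv, inner_neg_right, inner_sum]
      simp only [real_inner_smul_right]
      have hz : ∀ j, (inner ℝ (v k - vstar k) (u j) : ℝ) = 0 := by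
        intro j; rw [inner_sub_left, hv, hcon]; ring
      simp [hz]
    have h := norm_add_sq_real (v k - vstar k) (vstar k - Matrix.toEuclideanLin L (u k))
    rw [horth] at h
    rw [sub_add_sub_cancel] at h
    linarith
  have hFv : F v = F vstar + ∑ k, ‖v k - vstar k‖ ^ 2 := by
    rw [hF]
    simp only
    rw [← Finset.sum_add_distrib]
    refine Finset.sum_congr rfl fun k _ => ?_
    rw [key k]; ring
  constructor
  · have : (0:ℝ) ≤ ∑ k, ‖v k - vstar k‖ ^ 2 :=
      Finset.sum_nonneg fun k _ => sq_nonneg _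
    linarith
  · intro heq
    have hsum : ∑ k, ‖v k - vstar k‖ ^ 2 = 0 := by linarith
    funext k
    have hk := (Finset.sum_eq_zero_iff_of_nonneg
      (fun k _ => sq_nonneg ‖v k - vstar k‖)).mp hsum k (Finset.mem_univ k)
    have : v k - vstar k = 0 := by
      have := pow_eq_zero_iff (n := 2) (by norm_num) |>.mp hk
      simpa using this
    exact sub_eq_zero.mp this
end

section
/- Let L : ℝ → ℝ^{n×n} and Φ : ℝ → ℝ^{r×r} be continuous matrix-valued functions with Φ(t) skew-symmetric for every t. Suppose U : ℝ → ℝ^{n×r} is differentiable and satisfies the OTD evolution equation dU/dt = L(t)U − U(Uᵀ L(t) U − Φ(t)) with U(0)ᵀ U(0) = I (orthonormal initial columns). Then U(t)ᵀ U(t) = I for all t, i.e., the columns of U(t) remain orthonormal for all times. -/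
open Matrix

attribute [local instance] Matrix.normedAddCommGroup Matrix.normedSpace

section
attribute [-instance] instTopologicalSpaceMatrix Matrix.instUniformSpace Matrix.addCommGroup Matrix.addCommMonoid Matrix.module

/-- Matrix multiplication as a continuous bilinear map. -/
noncomputable def mulCLM (p q s : ℕ) :
    Matrix (Fin p) (Fin q) ℝ →L[ℝ] Matrix (Fin q) (Fin s) ℝ →L[ℝ] Matrix (Fin p) (Fin s) ℝ :=
  LinearMap.toContinuousLinearMap
    { toFun := fun A => LinearMap.toContinuousLinearMap
        { toFun := fun B => A * B
          map_add' := fun B C => Matrix.mul_add A B C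
          map_smul' := fun c B => (Matrix.mul_smul A c B) }
      map_add' := by
        intro A B
        ext C i j
        simp [Matrix.add_mul]
      map_smul' := by
        intro c A
        ext B i j
        simp [Matrix.smul_mul] }

@[simp] lemma mulCLM_apply {p q s : ℕ} (A : Matrix (Fin p) (Fin q) ℝ)
    (B : Matrix (Fin q) (Fin s) ℝ) : mulCLM p q s A B = A * B := rfl

/-- Transpose as a continuous linear map. -/
noncomputable def trCLM (p q : ℕ) :
    Matrix (Fin p) (Fin q) ℝ →L[ℝ] Matrix (Fin q) (Fin p) ℝ :=
  LinearMap.toContinuousLinearMap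
    { toFun := Matrix.transpose
      map_add' := fun A B => Matrix.transpose_add A B
      map_smul' := fun c A => Matrix.transpose_smul c A }

@[simp] lemma trCLM_apply {p q : ℕ} (A : Matrix (Fin p) (Fin q) ℝ) : trCLM p q A = Aᵀ := rfl

lemma HasDerivAt.matrix_mul {p q s : ℕ} {A : ℝ → Matrix (Fin p) (Fin q) ℝ}
    {B : ℝ → Matrix (Fin q) (Fin s) ℝ} {A' : Matrix (Fin p) (Fin q) ℝ}
    {B' : Matrix (Fin q) (Fin s) ℝ} {t : ℝ}
    (hA : HasDerivAt A A' t) (hB : HasDerivAt B B' t) :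
    HasDerivAt (fun t => A t * B t) (A' * B t + A t * B') t := by
  have h1 : HasDerivAt (fun t => mulCLM p q s (A t)) (mulCLM p q s A') t :=
    (mulCLM p q s).hasFDerivAt.comp_hasDerivAt t hA
  simpa using h1.clm_apply hB

lemma HasDerivAt.matrix_transpose {p q : ℕ} {A : ℝ → Matrix (Fin p) (Fin q) ℝ}
    {A' : Matrix (Fin p) (Fin q) ℝ} {t : ℝ} (hA : HasDerivAt A A' t) :
    HasDerivAt (fun t => (A t)ᵀ) A'ᵀ t := by
  exact (trCLM p q).hasFDerivAt.comp_hasDerivAt t hA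

theorem stmt2_aux {n r : ℕ} (L : ℝ → Matrix (Fin n) (Fin n) ℝ) (hL : Continuous L)
    (Φ : ℝ → Matrix (Fin r) (Fin r) ℝ) (hΦc : Continuous Φ)
    (hΦ : ∀ t, (Φ t)ᵀ = -(Φ t))
    (U : ℝ → Matrix (Fin n) (Fin r) ℝ)
    (hU : ∀ t, HasDerivAt U (L t * U t - U t * ((U t)ᵀ * L t * U t - Φ t)) t)
    (h0 : (U 0)ᵀ * U 0 = 1) :
    ∀ t : ℝ, (U t)ᵀ * U t = 1 := by
  intro T
  -- continuity of U
  have hUc : Continuous U := continuous_iff_continuousAt.2 fun t => (hU t).continuousAt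
  -- coefficient matrices
  set B : ℝ → Matrix (Fin r) (Fin r) ℝ :=
    fun t => (U t)ᵀ * (L t)ᵀ * U t + Φ t with hBdef
  set C : ℝ → Matrix (Fin r) (Fin r) ℝ :=
    fun t => (U t)ᵀ * L t * U t - Φ t with hCdef
  have hBc : Continuous B := by
    apply Continuous.add
    · exact ((hUc.matrix_transpose.matrix_mul hL.matrix_transpose).matrix_mul hUc)
    · exact hΦc
  have hCc : Continuous C := by
    apply Continuous.sub
    · exact ((hUc.matrix_transpose.matrix_mul hL).matrix_mul hUc)
    · exact hΦc
  -- error matrix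
  set E : ℝ → Matrix (Fin r) (Fin r) ℝ := fun t => (U t)ᵀ * U t - 1 with hEdef
  -- derivative of E
  have hE : ∀ t, HasDerivAt E (-(B t * E t + E t * C t)) t := by
    intro t
    have h1 := ((hU t).matrix_transpose.matrix_mul (hU t)).sub_const 1
    convert h1 using 1
    · exact rfl
    simp only [hBdef, hCdef, hEdef]
    simp only [Matrix.transpose_sub, Matrix.transpose_mul, Matrix.transpose_transpose, hΦ t]
    simp only [Matrix.mul_sub, Matrix.sub_mul, Matrix.mul_add, Matrix.add_mul,
      Matrix.neg_mul, Matrix.mul_neg, Matrix.mul_one, Matrix.one_mul, Matrix.mul_assoc,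
      Matrix.transpose_neg, neg_neg]
    abel
  -- the interval
  obtain ⟨a, b, hab, h0mem, hT⟩ :
      ∃ a b : ℝ, a ≤ b ∧ (0 : ℝ) ∈ Set.Ioo a b ∧ T ∈ Set.Icc a b :=
    ⟨-(|T| + 1), |T| + 1, by nlinarith [abs_nonneg T],
      ⟨by nlinarith [abs_nonneg T], by nlinarith [abs_nonneg T]⟩,
      ⟨by nlinarith [neg_abs_le T], by nlinarith [le_abs_self T]⟩⟩
  -- the (clamped) vector field
  set proj : ℝ → ℝ := fun t => (Set.projIcc a b hab t : ℝ) with hprojdef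
  set op : ℝ → (Matrix (Fin r) (Fin r) ℝ →L[ℝ] Matrix (Fin r) (Fin r) ℝ) :=
    fun s => -(mulCLM r r r (B s) + (mulCLM r r r).flip (C s)) with hopdef
  have hop_apply : ∀ s X, op s X = -(B s * X + X * C s) := by
    intro s X; simp [hopdef]
  set v : ℝ → Matrix (Fin r) (Fin r) ℝ → Matrix (Fin r) (Fin r) ℝ :=
    fun t X => op (proj t) X with hvdef
  -- uniform Lipschitz constant
  have hopc : Continuous op := by
    apply Continuous.neg
    apply Continuous.add
    · exact (mulCLM r r r).continuous.comp hBc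
    · exact ((mulCLM r r r).flip).continuous.comp hCc
  obtain ⟨M, hM⟩ := (isCompact_Icc : IsCompact (Set.Icc a b)).exists_bound_of_continuousOn
    hopc.continuousOn
  have hlip : ∀ t, LipschitzOnWith M.toNNReal (v t) Set.univ := by
    intro t
    apply LipschitzWith.lipschitzOnWith
    have h1 : LipschitzWith ‖op (proj t)‖₊ (op (proj t)) := (op (proj t)).lipschitz
    apply h1.weaken
    have h2 : ‖op (proj t)‖ ≤ M := hM _ (Set.projIcc a b hab t).2
    rw [← NNReal.coe_le_coe]
    calc (‖op (proj t)‖₊ : ℝ) = ‖op (proj t)‖ := rfl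
    _ ≤ M := h2
    _ ≤ max M 0 := le_max_left _ _
    _ = (M.toNNReal : ℝ) := (Real.coe_toNNReal' M).symm
  -- apply uniqueness of ODE solutions
  have key : Set.EqOn E (fun _ => 0) (Set.Icc a b) := by
    apply ODE_solution_unique_of_mem_Icc (v := v) (s := fun _ => Set.univ) (fun t _ => hlip t) h0mem
    · exact ((hUc.matrix_transpose.matrix_mul hUc).sub continuous_const).continuousOn
    · intro t ht
      have := hE t
      convert this using 1
      · exact rfl
      have hpt : proj t = t := by
        simp [hprojdef, Set.projIcc_of_mem hab (Set.mem_Icc_of_Ioo ht)]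
      show op (proj t) (E t) = _
      rw [hpt]
      exact hop_apply t (E t)
    · intro t _; trivial
    · exact continuousOn_const
    · intro t ht
      have : v t 0 = 0 := by
        show op (proj t) 0 = 0
        rw [hop_apply]; simp
      rw [this]
      exact hasDerivAt_const t 0
    · intro t _; trivial
    · simp only [hEdef, h0, sub_self]
  have := key hT
  simpa [hEdef, sub_eq_zero] using this

end

/-- An initially orthonormal basis evolved by the OTD equation
dU/dt = L(t)U − U(Uᵀ L(t) U − Φ(t)), with Φ(t) skew-symmetric, remains
orthonormal for all times. -/
theorem stmt2 {n r : ℕ} (L : ℝ → Matrix (Fin n) (Fin n) ℝ) (hL : Continuous L)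
    (Φ : ℝ → Matrix (Fin r) (Fin r) ℝ) (hΦc : Continuous Φ)
    (hΦ : ∀ t, (Φ t)ᵀ = -(Φ t))
    (U : ℝ → Matrix (Fin n) (Fin r) ℝ)
    (hU : ∀ t, HasDerivAt U (L t * U t - U t * ((U t)ᵀ * L t * U t - Φ t)) t)
    (h0 : (U 0)ᵀ * U 0 = 1) :
    ∀ t : ℝ, (U t)ᵀ * U t = 1 := by
  exact stmt2_aux L hL Φ hΦc hΦ U hU h0
end

section
/- Let L : ℝ → ℝ^{n×n} be continuous and let U, U' : ℝ → ℝ^{n×r} and ℝ^{n×r'} respectively (with r ≤ r') be differentiable solutions of the OTD equation dU/dt = L(t)U − U(Uᵀ L(t) U), each with orthonormal columns for all t. If the column space of U(0) is contained in the column space of U'(0), then the column space of U(t) is contained in the column space of U'(t) for all t ≥ 0. -/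
open Matrix

attribute [local instance] Matrix.normedAddCommGroup Matrix.normedSpace

section
local instance mtopFin {a b : ℕ} : TopologicalSpace (Matrix (Fin a) (Fin b) ℝ) :=
  (inferInstance : NormedAddCommGroup (Matrix (Fin a) (Fin b) ℝ)).toUniformSpace.toTopologicalSpace

noncomputable def mmCLM (a b c : ℕ) : Matrix (Fin a) (Fin b) ℝ →L[ℝ] Matrix (Fin b) (Fin c) ℝ →L[ℝ] Matrix (Fin a) (Fin c) ℝ :=
  LinearMap.toContinuousLinearMap <|
    (LinearMap.toContinuousLinearMap.toLinearMap.comp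
      (LinearMap.mk₂ ℝ (fun A B => A * B) Matrix.add_mul
        (fun c A B => Matrix.smul_mul c A B) Matrix.mul_add (fun c A B => Matrix.mul_smul A c B)))

lemma HasDerivAt.matmul {a b c : ℕ} {A : ℝ → Matrix (Fin a) (Fin b) ℝ}
    {B : ℝ → Matrix (Fin b) (Fin c) ℝ} {A' B'} {t : ℝ}
    (hA : HasDerivAt A A' t) (hB : HasDerivAt B B' t) :
    HasDerivAt (fun s => A s * B s) (A' * B t + A t * B') t := by
  have h1 : HasDerivAt (fun s => mmCLM a b c (A s)) (mmCLM a b c A') t :=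
    ((mmCLM a b c).hasFDerivAt.comp_hasDerivAt t hA)
  have := h1.clm_apply hB
  simpa [mmCLM] using this
end

lemma HasDerivAt.mtrans {a b : ℕ} {A : ℝ → Matrix (Fin a) (Fin b) ℝ} {A'} {t : ℝ}
    (hA : HasDerivAt A A' t) : HasDerivAt (fun s => (A s)ᵀ) A'ᵀ t := by
  have := (LinearMap.toContinuousLinearMap
    (Matrix.transposeLinearEquiv (Fin a) (Fin b) ℝ ℝ).toLinearMap).hasFDerivAt.comp_hasDerivAt t hA
  exact this

lemma norm_matmul_le {a b c : ℕ} (A : Matrix (Fin a) (Fin b) ℝ) (B : Matrix (Fin b) (Fin c) ℝ) :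
    ‖A * B‖ ≤ b * ‖A‖ * ‖B‖ := by
  rw [Matrix.norm_le_iff (by positivity)]
  intro i j
  calc ‖(A * B) i j‖ = ‖∑ k, A i k * B k j‖ := by rw [Matrix.mul_apply]
    _ ≤ ∑ k, ‖A i k * B k j‖ := norm_sum_le _ _
    _ ≤ ∑ k : Fin b, ‖A‖ * ‖B‖ := by
        refine Finset.sum_le_sum fun k _ => ?_
        rw [norm_mul]
        exact mul_le_mul (Matrix.norm_entry_le_entrywise_sup_norm A)
          (Matrix.norm_entry_le_entrywise_sup_norm B) (norm_nonneg _) (norm_nonneg _)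
    _ = b * ‖A‖ * ‖B‖ := by simp [Finset.sum_const, mul_assoc]

lemma otd_identity {n r r' : ℕ} (L : Matrix (Fin n) (Fin n) ℝ) (V : Matrix (Fin n) (Fin r) ℝ)
    (V' : Matrix (Fin n) (Fin r') ℝ) (ho : V'ᵀ * V' = 1) :
    (L * V - V * (Vᵀ * L * V)) -
      ((L * V' - V' * (V'ᵀ * L * V')) * (V'ᵀ * V) +
        V' * ((L * V' - V' * (V'ᵀ * L * V'))ᵀ * V + V'ᵀ * (L * V - V * (Vᵀ * L * V)))) =
    (L - V' * V'ᵀ * L - V' * V'ᵀ * Lᵀ) * (V - V' * (V'ᵀ * V)) -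
      (V - V' * (V'ᵀ * V)) * (Vᵀ * L * V) := by
  simp only [Matrix.transpose_sub, Matrix.transpose_mul, Matrix.transpose_transpose,
    Matrix.sub_mul, Matrix.mul_sub, Matrix.add_mul, Matrix.mul_add, Matrix.mul_assoc]
  simp only [← Matrix.mul_assoc]
  simp only [Matrix.mul_assoc, ho, Matrix.mul_one, Matrix.one_mul]
  abel_nf

/-- Nested OTD subspaces remain nested: if U and U' (with r ≤ r') solve the OTD
equation dU/dt = L(t)U − U(Uᵀ L(t) U), each with orthonormal columns, and the column
space of U(0) is contained in that of U'(0), then the column space of U(t) is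
contained in that of U'(t) for all t ≥ 0. -/
theorem stmt14 {n r r' : ℕ} (hr : r ≤ r')
    (L : ℝ → Matrix (Fin n) (Fin n) ℝ) (hL : Continuous L)
    (U : ℝ → Matrix (Fin n) (Fin r) ℝ) (U' : ℝ → Matrix (Fin n) (Fin r') ℝ)
    (hU : ∀ t, HasDerivAt U (L t * U t - U t * ((U t)ᵀ * L t * U t)) t)
    (hU' : ∀ t, HasDerivAt U' (L t * U' t - U' t * ((U' t)ᵀ * L t * U' t)) t)
    (hUo : ∀ t, (U t)ᵀ * U t = 1) (hU'o : ∀ t, (U' t)ᵀ * U' t = 1)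
    (h0 : LinearMap.range (U 0).mulVecLin ≤ LinearMap.range (U' 0).mulVecLin) :
    ∀ t ≥ (0 : ℝ),
      LinearMap.range (U t).mulVecLin ≤ LinearMap.range (U' t).mulVecLin := by
  have hUd : Differentiable ℝ U := fun t => (hU t).differentiableAt
  have hU'd : Differentiable ℝ U' := fun t => (hU' t).differentiableAt
  have hUc : Continuous U := hUd.continuous
  have hU'c : Continuous U' := hU'd.continuous
  set Sf : ℝ → Matrix (Fin r) (Fin r) ℝ := fun t => (U t)ᵀ * L t * U t with hSf
  set Af : ℝ → Matrix (Fin n) (Fin n) ℝ :=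
    fun t => L t - U' t * (U' t)ᵀ * L t - U' t * (U' t)ᵀ * (L t)ᵀ with hAf
  set W : ℝ → Matrix (Fin n) (Fin r) ℝ := fun t => U t - U' t * ((U' t)ᵀ * U t) with hWdef
  -- derivative of W
  have hW : ∀ t, HasDerivAt W (Af t * W t - W t * Sf t) t := by
    intro t
    have hM : HasDerivAt (fun s => (U' s)ᵀ * U s)
        ((L t * U' t - U' t * ((U' t)ᵀ * L t * U' t))ᵀ * U t +
          (U' t)ᵀ * (L t * U t - U t * ((U t)ᵀ * L t * U t))) t :=
      (hU' t).mtrans.matmul (hU t)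
    have h := (hU t).sub ((hU' t).matmul hM)
    have hid := otd_identity (L t) (U t) (U' t) (hU'o t)
    rw [hid] at h
    exact h
  -- zero initial condition
  have hW0 : W 0 = 0 := by
    have key : U' 0 * ((U' 0)ᵀ * U 0) = U 0 := by
      ext i j
      obtain ⟨y, hy⟩ := h0 ⟨Pi.single j 1, rfl⟩
      simp only [Matrix.mulVecLin_apply] at hy
      have h1 : (U' 0 * ((U' 0)ᵀ * U 0)) *ᵥ Pi.single j 1 = U 0 *ᵥ Pi.single j 1 := by
        rw [← Matrix.mulVec_mulVec, ← Matrix.mulVec_mulVec, ← hy,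
          Matrix.mulVec_mulVec, Matrix.mulVec_mulVec, Matrix.mul_assoc,
          hU'o 0, Matrix.mul_one]
      have := congrFun h1 i
      simpa using this
    simp [hWdef, key]
  intro t₀ ht₀
  -- bounds on the coefficients on [0, t₀]
  have hAc : Continuous Af := by
    apply Continuous.sub
    · exact Continuous.sub hL ((hU'c.matrix_mul hU'c.matrix_transpose).matrix_mul hL)
    · exact (hU'c.matrix_mul hU'c.matrix_transpose).matrix_mul hL.matrix_transpose
  have hScont : Continuous Sf := (hUc.matrix_transpose.matrix_mul hL).matrix_mul hUc
  obtain ⟨Ca, hCa⟩ := (isCompact_Icc (a := (0:ℝ)) (b := t₀)).exists_bound_of_continuousOn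
    hAc.continuousOn
  obtain ⟨Cs, hCs⟩ := (isCompact_Icc (a := (0:ℝ)) (b := t₀)).exists_bound_of_continuousOn
    hScont.continuousOn
  set K : NNReal := ((n : ℝ) * Ca + (r : ℝ) * Cs).toNNReal with hK
  set proj : ℝ → ℝ := fun τ => max 0 (min τ t₀) with hproj
  have hprojmem : ∀ τ, proj τ ∈ Set.Icc (0:ℝ) t₀ := by
    intro τ
    constructor
    · exact le_max_left _ _
    · exact max_le ht₀ (min_le_right _ _)
  set v : ℝ → Matrix (Fin n) (Fin r) ℝ → Matrix (Fin n) (Fin r) ℝ :=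
    fun τ X => Af (proj τ) * X - X * Sf (proj τ) with hv
  have hlip : ∀ τ, LipschitzOnWith K (v τ) Set.univ := by
    intro τ
    refine (LipschitzWith.of_dist_le_mul ?_).lipschitzOnWith
    intro X Y
    rw [dist_eq_norm, dist_eq_norm]
    have hdiff : v τ X - v τ Y = Af (proj τ) * (X - Y) - (X - Y) * Sf (proj τ) := by
      simp only [hv, Matrix.mul_sub, Matrix.sub_mul]
      abel
    rw [hdiff]
    have h1 : ‖Af (proj τ) * (X - Y)‖ ≤ (n : ℝ) * Ca * ‖X - Y‖ := by
      refine (norm_matmul_le _ _).trans ?_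
      exact mul_le_mul_of_nonneg_right
        (mul_le_mul_of_nonneg_left (hCa _ (hprojmem τ)) (Nat.cast_nonneg n)) (norm_nonneg _)
    have h2 : ‖(X - Y) * Sf (proj τ)‖ ≤ (r : ℝ) * Cs * ‖X - Y‖ := by
      calc ‖(X - Y) * Sf (proj τ)‖ ≤ (r : ℝ) * ‖X - Y‖ * ‖Sf (proj τ)‖ := norm_matmul_le _ _
        _ ≤ (r : ℝ) * ‖X - Y‖ * Cs :=
            mul_le_mul_of_nonneg_left (hCs _ (hprojmem τ)) (by positivity)
        _ = (r : ℝ) * Cs * ‖X - Y‖ := by ring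
    have h3 : ((n : ℝ) * Ca + (r : ℝ) * Cs) ≤ (K : ℝ) := Real.le_coe_toNNReal _
    calc ‖Af (proj τ) * (X - Y) - (X - Y) * Sf (proj τ)‖
        ≤ ‖Af (proj τ) * (X - Y)‖ + ‖(X - Y) * Sf (proj τ)‖ := norm_sub_le _ _
      _ ≤ (n : ℝ) * Ca * ‖X - Y‖ + (r : ℝ) * Cs * ‖X - Y‖ := add_le_add h1 h2
      _ = ((n : ℝ) * Ca + (r : ℝ) * Cs) * ‖X - Y‖ := by ring
      _ ≤ (K : ℝ) * ‖X - Y‖ := mul_le_mul_of_nonneg_right h3 (norm_nonneg _)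
  have hWt₀ : W t₀ = 0 := by
    have hprojeq : ∀ t ∈ Set.Ico (0:ℝ) t₀, proj t = t := by
      intro t ht
      simp only [hproj]
      rw [min_eq_left ht.2.le, max_eq_right ht.1]
    have huniq := ODE_solution_unique_of_mem_Icc_right (v := v)
      (s := fun _ => Set.univ) (K := K) (f := W) (g := fun _ => 0) (a := 0) (b := t₀)
      (fun τ _ => hlip τ)
      (fun t _ => ((hW t).continuousAt.continuousWithinAt))
      (by
        intro t ht
        have := (hW t).hasDerivWithinAt (s := Set.Ici t)
        simpa [hv, hprojeq t ht] using this)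
      (fun _ _ => Set.mem_univ _)
      continuousOn_const
      (by
        intro t ht
        have h := hasDerivWithinAt_const t (Set.Ici t) (0 : Matrix (Fin n) (Fin r) ℝ)
        simpa [hv] using h)
      (fun _ _ => Set.mem_univ _)
      (by simpa using hW0)
    have := huniq (Set.right_mem_Icc.mpr ht₀)
    simpa using this
  -- conclude
  have hfac : U t₀ = U' t₀ * ((U' t₀)ᵀ * U t₀) := by
    have := sub_eq_zero.mp hWt₀
    exact this
  rw [hfac, Matrix.mulVecLin_mul]
  exact LinearMap.range_comp_le_range _ _
end
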